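/- arXiv:1703.02527 — 4 statements merged into one kernel-verified Lean document; each statement's English description precedes it below -/
import Mathlib

section
/- The lower bound in the KL scaling lemma: for any c, p, q in [0,1] with max{p,q} < 1 and 0 < q, c·(1 - max{p,q})·KL(p‖q) ≤ KL(c·p‖c·q), where KL is the Bernoulli Kullback-Leibler divergence. -/
/-- Bernoulli Kullback-Leibler divergence. -/
noncomputable def klBer (p q : ℝ) : ℝ :=
  p * Real.log (p / q) + (1 - p) * Real.log ((1 - p) / (1 - q))

lemma klBer_self (x : ℝ) : klBer x x = 0 := by
  unfold klBer
  rcases eq_or_ne x 0 with h | h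
  · simp [h]
  rcases eq_or_ne x 1 with h1 | h1
  · simp [h1]
  · rw [div_self h, div_self (sub_ne_zero.mpr (Ne.symm h1))]
    simp

lemma hasDerivAt_klBer (p t : ℝ) (hp0 : 0 < p) (hp1 : p < 1) (ht0 : 0 < t) (ht1 : t < 1) :
    HasDerivAt (fun s => klBer p s) ((t - p) / (t * (1 - t))) t := by
  have h1t : (1:ℝ) - t ≠ 0 := sub_ne_zero.mpr (Ne.symm ht1.ne)
  have h1p : (1:ℝ) - p ≠ 0 := sub_ne_zero.mpr (Ne.symm hp1.ne)
  have h1 : HasDerivAt (fun s : ℝ => p / s) (p * -(t ^ 2)⁻¹) t := by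
    simpa [div_eq_mul_inv] using (hasDerivAt_inv ht0.ne').const_mul p
  have h1l := h1.log (div_ne_zero hp0.ne' ht0.ne')
  have hb : HasDerivAt (fun s : ℝ => 1 - s) (-1) t := (hasDerivAt_id t).const_sub 1
  have h2 : HasDerivAt (fun s : ℝ => (1 - p) / (1 - s)) ((1 - p) * (-(-1) / (1 - t) ^ 2)) t := by
    simpa [div_eq_mul_inv] using (hb.inv h1t).const_mul (1 - p)
  have h2l := h2.log (div_ne_zero (sub_ne_zero.mpr (Ne.symm hp1.ne)) h1t)
  have := (h1l.const_mul p).add (h2l.const_mul (1 - p))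
  refine this.congr_deriv ?_
  field_simp
  ring

lemma hasDerivAt_klBer0 (t : ℝ) (ht1 : t < 1) :
    HasDerivAt (fun s => klBer 0 s) (1 / (1 - t)) t := by
  have h1t : (1:ℝ) - t ≠ 0 := sub_ne_zero.mpr (Ne.symm ht1.ne)
  have heq : (fun s : ℝ => klBer 0 s) = fun s => -Real.log (1 - s) := by
    funext s
    unfold klBer
    simp [one_div, Real.log_inv]
  rw [heq]
  have hb : HasDerivAt (fun s : ℝ => 1 - s) (-1) t := (hasDerivAt_id t).const_sub 1
  have := (hb.log h1t).neg
  refine this.congr_deriv ?_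
  field_simp

theorem kl_scaling_lower (c p q : ℝ) (hc : c ∈ Set.Icc (0:ℝ) 1) (hp : p ∈ Set.Icc (0:ℝ) 1)
    (hq : q ∈ Set.Icc (0:ℝ) 1) (hmax : max p q < 1) (hq0 : 0 < q) :
    c * (1 - max p q) * klBer p q ≤ klBer (c * p) (c * q) := by
  obtain ⟨hc0, hc1⟩ := hc
  obtain ⟨hp0, _⟩ := hp
  have hp1 : p < 1 := (le_max_left p q).trans_lt hmax
  have hq1 : q < 1 := (le_max_right p q).trans_lt hmax
  rcases hc0.eq_or_lt with hc | hc
  · rw [← hc]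
    simp [zero_mul, klBer_self]
  rcases hp0.eq_or_lt with hp' | hp'
  · -- p = 0 case
    subst hp'
    rw [max_eq_right hq0.le]
    set G : ℝ → ℝ := fun t => klBer 0 (c * t) - c * (1 - q) * klBer 0 t with hG
    have hlin : ∀ t : ℝ, HasDerivAt (fun y : ℝ => c * y) c t := fun t => by
      simpa using (hasDerivAt_id t).const_mul c
    have key : ∀ t ∈ Set.Icc (0:ℝ) q,
        HasDerivAt G (1 / (1 - c * t) * c - c * (1 - q) * (1 / (1 - t))) t := by
      intro t ht
      have ht1 : t < 1 := lt_of_le_of_lt ht.2 hq1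
      have hct : c * t < 1 := by nlinarith [ht.1, ht.2]
      have hA := (hasDerivAt_klBer0 (c * t) hct).comp t (hlin t)
      have hB := (hasDerivAt_klBer0 t ht1).const_mul (c * (1 - q))
      exact hA.sub hB
    have hmono : MonotoneOn G (Set.Icc (0:ℝ) q) := by
      apply monotoneOn_of_deriv_nonneg (convex_Icc 0 q)
      · intro t ht; exact (key t ht).continuousAt.continuousWithinAt
      · intro t ht
        rw [interior_Icc] at ht
        exact (key t (Set.Ioo_subset_Icc_self ht)).differentiableAt.differentiableWithinAt
      · intro t ht
        rw [interior_Icc] at ht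
        rw [(key t (Set.Ioo_subset_Icc_self ht)).deriv]
        have h1 : 0 < 1 - c * t := by nlinarith [ht.1.le, ht.2.le]
        have h2 : 0 < 1 - t := by nlinarith [ht.2.le]
        have key2 : 1 / (1 - c * t) * c - c * (1 - q) * (1 / (1 - t))
            = c * ((1 - t) - (1 - q) * (1 - c * t)) / ((1 - c * t) * (1 - t)) := by
          field_simp
        rw [key2]
        apply div_nonneg _ (mul_pos h1 h2).le
        have f2 : 0 ≤ c * t := mul_nonneg hc.le ht.1.le
        nlinarith [mul_nonneg (mul_nonneg hc.le (sub_nonneg.mpr ht.2.le)) f2,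
          mul_nonneg hc.le (sub_nonneg.mpr ht.2.le), mul_nonneg hc.le f2]
    have h := hmono (Set.left_mem_Icc.mpr hq0.le) (Set.right_mem_Icc.mpr hq0.le) hq0.le
    simp only [hG, mul_zero, klBer_self, sub_zero] at h
    rw [mul_zero]
    linarith
  · rcases le_total q p with hqp | hpq
    · -- q ≤ p case
      rw [max_eq_left hqp]
      set F : ℝ → ℝ := fun t => klBer (c * p) (c * t) - c * (1 - p) * klBer p t with hF
      have hcp0 : 0 < c * p := mul_pos hc hp'
      have hcp1 : c * p < 1 := by nlinarith
      have hlin : ∀ t : ℝ, HasDerivAt (fun y : ℝ => c * y) c t := fun t => by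
        simpa using (hasDerivAt_id t).const_mul c
      have key : ∀ t ∈ Set.Icc q p,
          HasDerivAt F ((c * t - c * p) / ((c * t) * (1 - c * t)) * c
            - c * (1 - p) * ((t - p) / (t * (1 - t)))) t := by
        intro t ht
        have ht0 : 0 < t := lt_of_lt_of_le hq0 ht.1
        have ht1 : t < 1 := lt_of_le_of_lt ht.2 hp1
        have hct0 : 0 < c * t := mul_pos hc ht0
        have hct1 : c * t < 1 := by nlinarith
        have hA := (hasDerivAt_klBer (c * p) (c * t) hcp0 hcp1 hct0 hct1).comp t (hlin t)
        have hB := (hasDerivAt_klBer p t hp' hp1 ht0 ht1).const_mul (c * (1 - p))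
        exact hA.sub hB
      have hanti : AntitoneOn F (Set.Icc q p) := by
        apply antitoneOn_of_deriv_nonpos (convex_Icc q p)
        · intro t ht; exact (key t ht).continuousAt.continuousWithinAt
        · intro t ht
          rw [interior_Icc] at ht
          exact (key t (Set.Ioo_subset_Icc_self ht)).differentiableAt.differentiableWithinAt
        · intro t ht
          rw [interior_Icc] at ht
          rw [(key t (Set.Ioo_subset_Icc_self ht)).deriv]
          have ht0 : 0 < t := lt_of_lt_of_le hq0 ht.1.le
          have ht1 : t < 1 := lt_trans ht.2 hp1
          have h1 : 0 < 1 - c * t := by nlinarith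
          have h2 : 0 < 1 - t := by nlinarith
          have key2 : (c * t - c * p) / ((c * t) * (1 - c * t)) * c
              - c * (1 - p) * ((t - p) / (t * (1 - t)))
              = c * (t - p) * ((1 - t) - (1 - p) * (1 - c * t)) / (t * (1 - c * t) * (1 - t)) := by
            field_simp
          rw [key2]
          apply div_nonpos_of_nonpos_of_nonneg _ (mul_pos (mul_pos ht0 h1) h2).le
          have f1 : 0 ≤ (1 - t) - (1 - p) * (1 - c * t) := by
            have f2 : 0 ≤ c * t := mul_nonneg hc.le ht0.le
            nlinarith [mul_nonneg (sub_nonneg.mpr hp1.le) f2, ht.2.le]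
          have f3 : c * (t - p) ≤ 0 :=
            mul_nonpos_of_nonneg_of_nonpos hc.le (by linarith [ht.2])
          exact mul_nonpos_of_nonpos_of_nonneg f3 f1
      have h := hanti (Set.left_mem_Icc.mpr hqp) (Set.right_mem_Icc.mpr hqp) hqp
      simp only [hF, klBer_self, mul_zero, sub_zero] at h
      linarith
    · -- p ≤ q case
      rw [max_eq_right hpq]
      set F : ℝ → ℝ := fun t => klBer (c * p) (c * t) - c * (1 - q) * klBer p t with hF
      have hcp0 : 0 < c * p := mul_pos hc hp'
      have hcp1 : c * p < 1 := by nlinarith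
      have hlin : ∀ t : ℝ, HasDerivAt (fun y : ℝ => c * y) c t := fun t => by
        simpa using (hasDerivAt_id t).const_mul c
      have key : ∀ t ∈ Set.Icc p q,
          HasDerivAt F ((c * t - c * p) / ((c * t) * (1 - c * t)) * c
            - c * (1 - q) * ((t - p) / (t * (1 - t)))) t := by
        intro t ht
        have ht0 : 0 < t := lt_of_lt_of_le hp' ht.1
        have ht1 : t < 1 := lt_of_le_of_lt ht.2 hq1
        have hct0 : 0 < c * t := mul_pos hc ht0
        have hct1 : c * t < 1 := by nlinarith
        have hA := (hasDerivAt_klBer (c * p) (c * t) hcp0 hcp1 hct0 hct1).comp t (hlin t)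
        have hB := (hasDerivAt_klBer p t hp' hp1 ht0 ht1).const_mul (c * (1 - q))
        exact hA.sub hB
      have hmono : MonotoneOn F (Set.Icc p q) := by
        apply monotoneOn_of_deriv_nonneg (convex_Icc p q)
        · intro t ht; exact (key t ht).continuousAt.continuousWithinAt
        · intro t ht
          rw [interior_Icc] at ht
          exact (key t (Set.Ioo_subset_Icc_self ht)).differentiableAt.differentiableWithinAt
        · intro t ht
          rw [interior_Icc] at ht
          rw [(key t (Set.Ioo_subset_Icc_self ht)).deriv]
          have ht0 : 0 < t := lt_trans hp' ht.1
          have ht1 : t < 1 := lt_trans ht.2 hq1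
          have h1 : 0 < 1 - c * t := by nlinarith
          have h2 : 0 < 1 - t := by nlinarith
          have key2 : (c * t - c * p) / ((c * t) * (1 - c * t)) * c
              - c * (1 - q) * ((t - p) / (t * (1 - t)))
              = c * (t - p) * ((1 - t) - (1 - q) * (1 - c * t)) / (t * (1 - c * t) * (1 - t)) := by
            field_simp
          rw [key2]
          apply div_nonneg _ (mul_pos (mul_pos ht0 h1) h2).le
          have f1 : 0 ≤ (1 - t) - (1 - q) * (1 - c * t) := by
            have f2 : 0 ≤ c * t := mul_nonneg hc.le ht0.le
            nlinarith [mul_nonneg (sub_nonneg.mpr hq1.le) f2, ht.2.le]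
          have f3 : 0 ≤ c * (t - p) := mul_nonneg hc.le (by linarith [ht.1])
          exact mul_nonneg f3 f1
      have h := hmono (Set.left_mem_Icc.mpr hpq) (Set.right_mem_Icc.mpr hpq) hpq
      simp only [hF, klBer_self, mul_zero, sub_zero] at h
      linarith
end

section
/- Chernoff–Hoeffding bound in KL form (upper tail): if X₁,…,Xₙ are i.i.d. Bernoulli(μ) random variables and μ̂ = (1/n)·Σᵢ Xᵢ, then for any ε ∈ [0, 1-μ], P(μ̂ ≥ μ + ε) ≤ exp(−n·KL(μ+ε‖μ)). -/
open MeasureTheory ProbabilityTheory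

lemma bernoulli_exp_ae {Ω : Type*} [MeasurableSpace Ω] (P : Measure Ω) (X : Ω → ℝ)
    (hval : ∀ᵐ ω ∂P, X ω = 0 ∨ X ω = 1) (t : ℝ) :
    (fun ω => Real.exp (t * X ω)) =ᵐ[P]
      (fun ω => Set.indicator {ω | X ω = 1} (fun _ => Real.exp t - 1) ω + 1) := by
  filter_upwards [hval] with ω hω
  rcases hω with h | h
  · have : ω ∉ {ω | X ω = 1} := by simp [Set.mem_setOf_eq, h]
    simp [h, Set.indicator_of_notMem this]
  · have : ω ∈ {ω | X ω = 1} := h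
    simp [h, Set.indicator_of_mem this]

lemma bernoulli_int {Ω : Type*} [MeasurableSpace Ω] (P : Measure Ω)
    [IsProbabilityMeasure P] (X : Ω → ℝ) (hX : Measurable X)
    (hval : ∀ᵐ ω ∂P, X ω = 0 ∨ X ω = 1) (t : ℝ) :
    Integrable (fun ω => Real.exp (t * X ω)) P := by
  have hA : MeasurableSet {ω | X ω = 1} := hX (measurableSet_singleton 1)
  refine (Integrable.congr ?_ (bernoulli_exp_ae P X hval t).symm)
  exact ((integrable_const (Real.exp t - 1)).indicator hA).add (integrable_const 1)

lemma bernoulli_mgf {Ω : Type*} [MeasurableSpace Ω] (P : Measure Ω)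
    [IsProbabilityMeasure P] (X : Ω → ℝ) (hX : Measurable X) (μ : ℝ)
    (hμ : μ ∈ Set.Icc (0:ℝ) 1)
    (hval : ∀ᵐ ω ∂P, X ω = 0 ∨ X ω = 1)
    (hmean : P {ω | X ω = 1} = ENNReal.ofReal μ) (t : ℝ) :
    mgf X P t = (1 - μ) + μ * Real.exp t := by
  have hA : MeasurableSet {ω | X ω = 1} := hX (measurableSet_singleton 1)
  have h1 : mgf X P t
      = ∫ ω, (Set.indicator {ω | X ω = 1} (fun _ => Real.exp t - 1) ω + 1) ∂P :=
    integral_congr_ae (bernoulli_exp_ae P X hval t)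
  rw [h1, integral_add (((integrable_const (Real.exp t - 1)).indicator hA))
    (integrable_const 1), integral_indicator_const _ hA, integral_const]
  have : (P {ω | X ω = 1}).toReal = μ := by
    rw [hmean, ENNReal.toReal_ofReal hμ.1]
  simp [this]
  rw [show P.real {ω | X ω = 1} = μ from this]
  ring

/-- Chernoff–Hoeffding bound in KL form, upper tail. -/
theorem chernoff_hoeffding_upper {Ω : Type*} [MeasurableSpace Ω] (P : Measure Ω)
    [IsProbabilityMeasure P] (n : ℕ) (hn : 0 < n) (X : Fin n → Ω → ℝ) (μ : ℝ)
    (hμ : μ ∈ Set.Icc (0:ℝ) 1) (hmeas : ∀ i, Measurable (X i))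
    (hindep : iIndepFun X P)
    (hval : ∀ i, ∀ᵐ ω ∂P, X i ω = 0 ∨ X i ω = 1)
    (hmean : ∀ i, P {ω | X i ω = 1} = ENNReal.ofReal μ)
    (ε : ℝ) (hε : ε ∈ Set.Icc (0:ℝ) (1 - μ)) :
    P {ω | μ + ε ≤ (∑ i, X i ω) / n} ≤ ENNReal.ofReal (Real.exp (-(n : ℝ) * klBer (μ + ε) μ)) := by
  set p : ℝ := μ + ε with hp
  have hn' : (0:ℝ) < n := by exact_mod_cast hn
  set E : Set Ω := {ω | p ≤ (∑ i, X i ω) / n} with hE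
  -- trivial bound when the KL is nonpositive
  have trivial_bound : klBer p μ ≤ 0 →
      P E ≤ ENNReal.ofReal (Real.exp (-(n : ℝ) * klBer p μ)) := by
    intro hkl
    calc P E ≤ 1 := prob_le_one
    _ = ENNReal.ofReal (Real.exp 0) := by simp
    _ ≤ _ := by
      apply ENNReal.ofReal_le_ofReal
      apply Real.exp_le_exp.2
      nlinarith
  -- the Chernoff bound for arbitrary t ≥ 0
  have chernoff : ∀ t : ℝ, 0 ≤ t →
      (P E).toReal ≤ Real.exp (-t * ((n:ℝ) * p)) * ((1 - μ) + μ * Real.exp t) ^ n := by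
    intro t ht
    have hint : ∀ i ∈ Finset.univ, Integrable (fun ω => Real.exp (t * X i ω)) P :=
      fun i _ => bernoulli_int P (X i) (hmeas i) (hval i) t
    have hS : E = {ω | (n:ℝ) * p ≤ (∑ i, X i) ω} := by
      ext ω
      simp only [hE, Set.mem_setOf_eq, Finset.sum_apply]
      rw [le_div_iff₀ hn', mul_comm]
    have hintS : Integrable (fun ω => Real.exp (t * (∑ i, X i) ω)) P :=
      hindep.integrable_exp_mul_sum hmeas hint
    have hbd := measure_ge_le_exp_mul_mgf (X := ∑ i, X i) (μ := P) ((n:ℝ) * p) ht hintS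
    rw [hS]
    refine hbd.trans ?_
    rw [hindep.mgf_sum hmeas]
    have : ∀ i ∈ Finset.univ, mgf (X i) P t = (1 - μ) + μ * Real.exp t := fun i _ =>
      bernoulli_mgf P (X i) (hmeas i) μ hμ (hval i) (hmean i) t
    rw [Finset.prod_congr rfl this, Finset.prod_const, Finset.card_univ, Fintype.card_fin]
  have hPtop : P E ≠ ⊤ := measure_ne_top P E
  have key : ∀ r : ℝ, (P E).toReal ≤ r → P E ≤ ENNReal.ofReal r := by
    intro r hr
    rw [← ENNReal.ofReal_toReal hPtop]
    exact ENNReal.ofReal_le_ofReal hr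
  rcases eq_or_lt_of_le hε.1 with hε0 | hε0
  · -- ε = 0
    apply trivial_bound
    have hlog : Real.log (μ / μ) = 0 := by
      rcases eq_or_ne μ 0 with h | h
      · simp [h]
      · rw [div_self h, Real.log_one]
    have hlog2 : Real.log ((1 - μ) / (1 - μ)) = 0 := by
      rcases eq_or_ne (1 - μ) 0 with h | h
      · simp [h]
      · rw [div_self h, Real.log_one]
    simp [klBer, hp, ← hε0, hlog, hlog2]
  rcases eq_or_lt_of_le hμ.1 with hμ0 | hμ0
  · -- μ = 0
    apply trivial_bound
    have h1 : p = ε := by simp [hp, ← hμ0]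
    have hε1 : ε ≤ 1 := by have := hε.2; linarith [hμ.1]
    simp only [klBer, ← hμ0, h1]
    have : Real.log (ε / 0) = 0 := by simp
    rw [this, mul_zero, zero_add, sub_zero, div_one]
    exact mul_nonpos_of_nonneg_of_nonpos (by linarith)
      (Real.log_nonpos (by linarith) (by linarith))
  rcases eq_or_lt_of_le (by linarith [hε.2] : p ≤ 1) with hp1 | hp1
  · -- p = 1 : limit argument
    have hμ1 : μ < 1 := by
      rcases eq_or_lt_of_le hμ.2 with h | h
      · exfalso; have h2 := hε.2; linarith
      · exact h
    have hkl : klBer p μ = -Real.log μ := by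
      simp [klBer, hp1, Real.log_div one_ne_zero (ne_of_gt hμ0)]
    have hRHS : Real.exp (-(n : ℝ) * klBer p μ) = μ ^ n := by
      rw [hkl]
      rw [show -(n:ℝ) * -Real.log μ = (n:ℝ) * Real.log μ by ring,
        Real.exp_nat_mul, Real.exp_log hμ0]
    rw [hRHS]
    apply key
    -- bound for each t, rewritten
    have hb : ∀ t : ℝ, 0 ≤ t → (P E).toReal ≤ ((1 - μ) * Real.exp (-t) + μ) ^ n := by
      intro t ht
      refine (chernoff t ht).trans_eq ?_
      rw [hp1, mul_one, show -t * (n:ℝ) = (n:ℝ) * (-t) by ring, Real.exp_nat_mul,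
        ← mul_pow]
      congr 1
      rw [Real.exp_neg]
      field_simp
    have htend : Filter.Tendsto (fun t : ℝ => ((1 - μ) * Real.exp (-t) + μ) ^ n)
        Filter.atTop (nhds (μ ^ n)) := by
      have h0 : Filter.Tendsto (fun t : ℝ => (1 - μ) * Real.exp (-t) + μ)
          Filter.atTop (nhds μ) := by
        have := (Real.tendsto_exp_neg_atTop_nhds_zero.const_mul (1 - μ)).add_const μ
        simpa using this
      simpa using h0.pow n
    exact ge_of_tendsto htend ((Filter.eventually_ge_atTop 0).mono fun t ht => hb t ht)
  · -- 0 < μ, μ < p < 1 : optimal t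
    have hμp : μ < p := by simp [hp]; linarith
    have h1p : 0 < 1 - p := by linarith
    have h1μ : 0 < 1 - μ := by linarith
    have hp0 : 0 < p := lt_trans hμ0 hμp
    set t : ℝ := Real.log (p * (1 - μ) / ((1 - p) * μ)) with htdef
    have harg : 0 < p * (1 - μ) / ((1 - p) * μ) := by positivity
    have ht0 : 0 ≤ t := by
      apply Real.log_nonneg
      rw [le_div_iff₀ (by positivity)]
      nlinarith
    have hexp : Real.exp t = p * (1 - μ) / ((1 - p) * μ) := Real.exp_log harg
    apply key
    refine (chernoff t ht0).trans_eq ?_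
    have hbase : (1 - μ) + μ * Real.exp t = (1 - μ) / (1 - p) := by
      rw [hexp]
      field_simp
      ring
    rw [hbase, show (1 - μ) / (1 - p) = Real.exp (Real.log ((1 - μ) / (1 - p))) by
      rw [Real.exp_log (by positivity)], ← Real.exp_nat_mul, ← Real.exp_add]
    congr 1
    rw [htdef, klBer,
      Real.log_div (by positivity) (by positivity),
      Real.log_mul (ne_of_gt hp0) (ne_of_gt h1μ),
      Real.log_mul (ne_of_gt h1p) (ne_of_gt hμ0),
      Real.log_div (ne_of_gt h1μ) (ne_of_gt h1p),
      Real.log_div (ne_of_gt hp0) (ne_of_gt hμ0),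
      Real.log_div (ne_of_gt h1p) (ne_of_gt h1μ)]
    ring
end

section
/- The cascade model satisfies the correct examination scaling assumption: let R = (d₁,…,d_K) be a list with positions i ≤ j such that α(d_i) ≤ α(d_j), and let R' be R with items d_i and d_j exchanged. Then the cascade examination probabilities satisfy χ(R,j) ≥ χ(R',j), where χ(R,k) = ∏_{m=1}^{k-1}(1−α(d_m)). -/
open Finset

/-- The cascade model satisfies the correct examination scaling assumption: swapping a
less attractive item at position `i` with a more attractive item at position `j ≥ i`
cannot increase the examination probability of position `j`. -/
theorem cascade_examination_scaling {D : Type*} [DecidableEq D] (K : ℕ) (α : D → ℝ)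
    (hα : ∀ e, α e ∈ Set.Icc (0:ℝ) 1) (d : Fin K → D) (i j : Fin K) (hij : i ≤ j)
    (hatt : α (d i) ≤ α (d j)) :
    ∏ m ∈ univ.filter (fun m => m < j),
        (1 - α (Function.update (Function.update d i (d j)) j (d i) m)) ≤
      ∏ m ∈ univ.filter (fun m => m < j), (1 - α (d m)) := by
  apply Finset.prod_le_prod
  · intro m hm
    have h := hα (Function.update (Function.update d i (d j)) j (d i) m)
    simp only [Set.mem_Icc] at h
    linarith [h.2]
  · intro m hm
    simp only [Finset.mem_filter] at hm
    have hmj : m ≠ j := ne_of_lt hm.2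
    rw [Function.update_of_ne hmj]
    by_cases hmi : m = i
    · subst hmi
      rw [Function.update_self]
      linarith
    · rw [Function.update_of_ne hmi]
end

section
/- The cascade model satisfies the optimal examination assumption: if α(1) ≥ α(2) ≥ … ≥ α(L) with α(d) ∈ [0,1], then for any list R of K distinct items from [L] and any position k ∈ [K], ∏_{m=1}^{k-1}(1−α(d_m)) ≥ ∏_{m=1}^{k-1}(1−α(m)). -/
open Finset

lemma fin_strictMono_le {n m : ℕ} (f : Fin n → Fin m) (hf : StrictMono f) (i : Fin n) :
    (i : ℕ) ≤ (f i : ℕ) := by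
  obtain ⟨v, hv⟩ := i
  simp only []
  induction v with
  | zero => simp
  | succ w ih =>
    have hw : w < n := Nat.lt_of_succ_lt hv
    have h1 : (⟨w, hw⟩ : Fin n) < ⟨w+1, hv⟩ := by simp [Fin.lt_def]
    have h2 : (f ⟨w, hw⟩ : ℕ) < (f ⟨w+1, hv⟩ : ℕ) := hf h1
    have h3 := ih hw
    omega

/-- The cascade model satisfies the optimal examination assumption: any position is
least examined under the optimal list `(1, …, K)`. -/
theorem cascade_optimal_examination (L K : ℕ) (hKL : K ≤ L) (α : Fin L → ℝ)
    (hα01 : ∀ e, α e ∈ Set.Icc (0:ℝ) 1) (hα : ∀ i j : Fin L, i ≤ j → α j ≤ α i)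
    (d : Fin K → Fin L) (hd : Function.Injective d) (k : Fin K) :
    ∏ m ∈ univ.filter (fun m => m < k), (1 - α (Fin.castLE hKL m)) ≤
      ∏ m ∈ univ.filter (fun m => m < k), (1 - α (d m)) := by
  set S : Finset (Fin K) := univ.filter (fun m => m < k) with hS
  have hScard : S.card = (k : ℕ) := by
    have : S = Finset.Iio k := by ext m; simp [hS]
    rw [this, Fin.card_Iio]
  set T : Finset (Fin L) := S.image d with hT
  have hTcard : T.card = (k : ℕ) := by
    rw [hT, Finset.card_image_of_injective _ hd, hScard]
  have hrhs : ∏ m ∈ S, (1 - α (d m)) = ∏ t ∈ T, (1 - α t) := by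
    rw [hT, Finset.prod_image (fun x _ y _ h => hd h)]
  set e := T.orderIsoOfFin hTcard with he
  have hrhs2 : ∏ t ∈ T, (1 - α t) = ∏ i : Fin (k : ℕ), (1 - α (e i)) := by
    rw [← Finset.prod_coe_sort T (fun t => 1 - α t)]
    exact (Equiv.prod_comp e.toEquiv (fun t : T => 1 - α (t : Fin L))).symm
  have hlhs : ∏ m ∈ S, (1 - α (Fin.castLE hKL m)) =
      ∏ i : Fin (k : ℕ), (1 - α ⟨(i : ℕ), lt_of_lt_of_le (lt_of_lt_of_le i.2 k.2.le) hKL⟩) := by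
    symm
    apply Finset.prod_nbij (fun (i : Fin (k : ℕ)) => (⟨(i : ℕ), lt_of_lt_of_le i.2 k.2.le⟩ : Fin K))
    · intro i _; simp only [hS, Finset.mem_filter, Finset.mem_univ, true_and, Fin.lt_def]; exact i.2
    · intro a _ b _ hab; simpa [Fin.ext_iff] using hab
    · intro m hm
      simp only [hS, Finset.coe_filter, Set.mem_setOf_eq, Fin.lt_def] at hm
      exact ⟨⟨(m : ℕ), hm.2⟩, by simp, by simp [Fin.ext_iff]⟩
    · intro i _; congr 1
  rw [hrhs, hrhs2, hlhs]
  apply Finset.prod_le_prod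
  · intro i _
    have := (hα01 ⟨(i : ℕ), lt_of_lt_of_le (lt_of_lt_of_le i.2 k.2.le) hKL⟩).2
    linarith
  · intro i _
    have hmono : StrictMono (fun i : Fin (k:ℕ) => ((e i : Fin L))) :=
      fun a b hab => e.strictMono hab
    have hle : (i : ℕ) ≤ ((e i : Fin L) : ℕ) := fin_strictMono_le _ hmono i
    have : α ((e i : Fin L)) ≤ α ⟨(i : ℕ), lt_of_lt_of_le (lt_of_lt_of_le i.2 k.2.le) hKL⟩ :=
      hα _ _ hle
    linarith
end
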